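/- Fix α > 1. Let N be a positive integer, let g be an N-density-like arithmetic function such that ∑_{d=1}^∞ (1 − g(d))/d converges, set f(n) = ∏_{d|n} g(d), and let {L_t}_{t≥1} satisfy: (i) L_t | L_{t+1}, (ii) L_t → ∞, and (iii) there exists h : ℝ_{>0} → ℝ with h(x) → ∞ such that every integer n ≥ 1 with gcd(n, N) = 1 not dividing L_t satisfies n > h(t). Set A_t^{(α)} = (1/L_t) ∑_{r | L_t} f(r)^α φ(L_t / r). Then the sequence {A_t^{(α)}}_{t≥1} converges to a limit A_f^{(α)}, and A_f^{(α)} = lim_{x→∞} (1/x) ∑_{n ≤ x} f(n)^α is the mean value of f^α. -/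

import Mathlib

open Filter Finset


/-- Weierstrass product inequality. -/
lemma mvp_weierstrass (s : Finset ℕ) (f : ℕ → ℝ) (h0 : ∀ i ∈ s, 0 ≤ f i)
    (h1 : ∀ i ∈ s, f i ≤ 1) :
    1 - ∑ i ∈ s, (1 - f i) ≤ ∏ i ∈ s, f i := by
  induction s using Finset.cons_induction with
  | empty => simp
  | cons a s ha ih =>
    rw [Finset.sum_cons, Finset.prod_cons]
    have h0a := h0 a (Finset.mem_cons_self a s)
    have h1a := h1 a (Finset.mem_cons_self a s)
    have h0s : ∀ i ∈ s, 0 ≤ f i := fun i hi => h0 i (Finset.mem_cons_of_mem hi)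
    have h1s : ∀ i ∈ s, f i ≤ 1 := fun i hi => h1 i (Finset.mem_cons_of_mem hi)
    have ihs := ih h0s h1s
    have hP : (0:ℝ) ≤ ∏ i ∈ s, f i := Finset.prod_nonneg h0s
    have hS : (0:ℝ) ≤ ∑ i ∈ s, (1 - f i) :=
      Finset.sum_nonneg fun i hi => by linarith [h1s i hi]
    nlinarith

/-- product over a superset of factors in `[0,1]` is at most product over subset. -/
lemma mvp_prod_subset {s t : Finset ℕ} (f : ℕ → ℝ) (hst : s ⊆ t)
    (h0 : ∀ i ∈ t, 0 ≤ f i) (h1 : ∀ i ∈ t, f i ≤ 1) :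
    ∏ i ∈ t, f i ≤ ∏ i ∈ s, f i := by
  rw [← Finset.prod_sdiff hst]
  have h2 : ∏ i ∈ t \ s, f i ≤ 1 :=
    Finset.prod_le_one (fun i hi => h0 i (Finset.mem_sdiff.mp hi).1)
      (fun i hi => h1 i (Finset.mem_sdiff.mp hi).1)
  have h3 : (0:ℝ) ≤ ∏ i ∈ s, f i := Finset.prod_nonneg fun i hi => h0 i (hst hi)
  nlinarith [Finset.prod_nonneg (fun i hi => h0 i (Finset.mem_sdiff.mp hi).1 : ∀ i ∈ t \ s, 0 ≤ f i)]

lemma mvp_card_gcd (L r : ℕ) (hL : 0 < L) (hr : r ∣ L) :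
    ((Finset.Ioc 0 L).filter (fun n => Nat.gcd n L = r)).card
      = Nat.totient (L / r) := by
  have hr0 : 0 < r := Nat.pos_of_dvd_of_pos hr hL
  set k := L / r with hk
  have hLrk : L = r * k := (Nat.mul_div_cancel' hr).symm
  have htot : ((Finset.Ioc 0 k).filter (fun m => Nat.gcd k m = 1)).card = Nat.totient k := by
    have := Nat.filter_coprime_Ico_eq_totient k 1
    rw [← this]
    congr 1
    ext x
    simp [Nat.lt_succ_iff, Nat.Coprime, Nat.succ_le_iff, add_comm]
  rw [← htot]
  refine Finset.card_bij' (fun n _ => n / r) (fun m _ => r * m) ?_ ?_ ?_ ?_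
  · intro n hn
    simp only [Finset.mem_filter, Finset.mem_Ioc] at hn ⊢
    obtain ⟨⟨hn0, hnL⟩, hg⟩ := hn
    have hrn : r ∣ n := hg ▸ Nat.gcd_dvd_left n L
    refine ⟨⟨Nat.div_pos (Nat.le_of_dvd hn0 hrn) hr0, ?_⟩, ?_⟩
    · rw [hk]; exact Nat.div_le_div_right hnL
    · -- gcd k (n/r) = 1
      have h1 : r * Nat.gcd (n / r) k = Nat.gcd n L := by
        rw [hLrk, ← Nat.gcd_mul_left, Nat.mul_div_cancel' hrn]
      rw [hg] at h1
      have : Nat.gcd (n / r) k = 1 :=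
        Nat.eq_of_mul_eq_mul_left hr0 (by rw [h1, mul_one])
      rw [Nat.gcd_comm]; exact this
  · intro m hm
    simp only [Finset.mem_filter, Finset.mem_Ioc] at hm ⊢
    obtain ⟨⟨hm0, hmk⟩, hg⟩ := hm
    constructor
    · exact ⟨Nat.mul_pos hr0 hm0, by rw [hLrk]; exact Nat.mul_le_mul_left r hmk⟩
    · rw [hLrk, Nat.gcd_mul_left, Nat.gcd_comm, hg, mul_one]
  · intro n hn
    simp only [Finset.mem_filter, Finset.mem_Ioc] at hn
    exact Nat.mul_div_cancel' (hn.2 ▸ Nat.gcd_dvd_left n L)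
  · intro m hm
    exact Nat.mul_div_cancel_left m hr0

section
variable (G : ℕ → ℝ)

/-- fiberwise sum over gcd classes. -/
lemma mvp_fiber_sum (L : ℕ) (hL : 0 < L) :
    ∑ n ∈ Finset.Ioc 0 L, ∏ d ∈ (Nat.gcd n L).divisors, G d
      = ∑ r ∈ L.divisors, (∏ d ∈ r.divisors, G d) * (Nat.totient (L / r) : ℝ) := by
  have hmaps : ∀ n ∈ Finset.Ioc 0 L, Nat.gcd n L ∈ L.divisors := by
    intro n hn
    exact Nat.mem_divisors.mpr ⟨Nat.gcd_dvd_right n L, hL.ne'⟩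
  rw [← Finset.sum_fiberwise_of_maps_to hmaps (fun n => ∏ d ∈ (Nat.gcd n L).divisors, G d)]
  refine Finset.sum_congr rfl fun r hr => ?_
  have : ∀ n ∈ (Finset.Ioc 0 L).filter (fun n => Nat.gcd n L = r),
      (∏ d ∈ (Nat.gcd n L).divisors, G d) = ∏ d ∈ r.divisors, G d := by
    intro n hn
    rw [(Finset.mem_filter.mp hn).2]
  rw [Finset.sum_congr rfl this, Finset.sum_const, nsmul_eq_mul,
    mvp_card_gcd L r hL (Nat.mem_divisors.mp hr).1, mul_comm]

/-- periodic block sums. -/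
lemma mvp_block_sum (L : ℕ) (q : ℕ → ℝ) (k : ℕ) :
    ∑ n ∈ Finset.Ioc 0 (k * L), q (Nat.gcd n L) = k * ∑ n ∈ Finset.Ioc 0 L, q (Nat.gcd n L) := by
  induction k with
  | zero => simp
  | succ k ih =>
    have h1 : (k : ℕ) * L ≤ (k + 1) * L := by nlinarith
    rw [← Finset.sum_Ioc_consecutive (fun n => q (Nat.gcd n L)) (Nat.zero_le (k * L)) h1, ih]
    have h2 : ∑ n ∈ Finset.Ioc (k * L) ((k+1) * L), q (Nat.gcd n L)
        = ∑ n ∈ Finset.Ioc 0 L, q (Nat.gcd n L) := by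
      have hIoc : Finset.Ioc (k * L) ((k+1) * L)
          = Finset.map (addRightEmbedding (k * L)) (Finset.Ioc 0 L) := by
        rw [Finset.map_add_right_Ioc, zero_add, add_one_mul, add_comm L (k*L)]
      rw [hIoc, Finset.sum_map]
      refine Finset.sum_congr rfl fun n _ => ?_
      simp only [addRightEmbedding_apply]
      rw [Nat.gcd_add_mul_right_left L n k]
    rw [h2]
    push_cast
    ring
end
open Filter Finset

/-- Swap a divisor double sum and bound by the harmonic-weighted tail. -/
lemma mvp_swap (m D : ℕ) (c : ℕ → ℝ) (hc : ∀ d, 0 < d → 0 ≤ c d) :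
    ∑ n ∈ Finset.Ioc 0 m, ∑ d ∈ n.divisors.filter (fun d => D ≤ d), c d
      ≤ (m : ℝ) * ∑ d ∈ (Finset.Ioc 0 m).filter (fun d => D ≤ d), c d / d := by
  have step1 : ∀ n ∈ Finset.Ioc 0 m,
      ∑ d ∈ n.divisors.filter (fun d => D ≤ d), c d
        = ∑ d ∈ Finset.Ioc 0 m, (if d ∣ n ∧ D ≤ d then c d else 0) := by
    intro n hn
    rw [Finset.mem_Ioc] at hn
    rw [Finset.sum_ite, Finset.sum_const, smul_zero, add_zero]
    congr 1
    ext d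
    simp only [Finset.mem_filter, Finset.mem_Ioc, Nat.mem_divisors]
    constructor
    · rintro ⟨⟨hd, hn0⟩, hD⟩
      exact ⟨⟨Nat.pos_of_dvd_of_pos hd hn.1, (Nat.le_of_dvd hn.1 hd).trans hn.2⟩, hd, hD⟩
    · rintro ⟨_, hd, hD⟩
      exact ⟨⟨hd, hn.1.ne'⟩, hD⟩
  rw [Finset.sum_congr rfl step1, Finset.sum_comm]
  have step2 : ∀ d ∈ Finset.Ioc 0 m,
      ∑ n ∈ Finset.Ioc 0 m, (if d ∣ n ∧ D ≤ d then c d else 0)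
        ≤ (if D ≤ d then (m : ℝ) * (c d / d) else 0) := by
    intro d hd
    rw [Finset.mem_Ioc] at hd
    by_cases hD : D ≤ d
    · simp only [hD, and_true, if_true]
      have : ∑ n ∈ Finset.Ioc 0 m, (if d ∣ n then c d else 0)
          = ((Finset.Ioc 0 m).filter (fun n => d ∣ n)).card * c d := by
        rw [Finset.sum_ite, Finset.sum_const, Finset.sum_const, smul_zero, add_zero,
          nsmul_eq_mul]
      rw [this, Nat.Ioc_filter_dvd_card_eq_div]
      have h1 : ((m / d : ℕ) : ℝ) ≤ (m : ℝ) / d := Nat.cast_div_le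
      have h2 : 0 ≤ c d := hc d hd.1
      calc ((m / d : ℕ) : ℝ) * c d ≤ (m : ℝ) / d * c d := by
            exact mul_le_mul_of_nonneg_right h1 h2
        _ = (m : ℝ) * (c d / d) := by ring
    · simp only [hD, and_false, if_false]
      simp
  calc ∑ d ∈ Finset.Ioc 0 m, ∑ n ∈ Finset.Ioc 0 m, (if d ∣ n ∧ D ≤ d then c d else 0)
      ≤ ∑ d ∈ Finset.Ioc 0 m, (if D ≤ d then (m : ℝ) * (c d / d) else 0) :=
        Finset.sum_le_sum step2
    _ = (m : ℝ) * ∑ d ∈ (Finset.Ioc 0 m).filter (fun d => D ≤ d), c d / d := by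
        rw [← Finset.sum_filter, Finset.mul_sum]

/-- bound a finite sum of tail terms by the tsum tail. -/
lemma mvp_tail_bound (D : ℕ) (u : ℕ → ℝ) (hu : ∀ d, 0 ≤ u d) (hsum : Summable u)
    (s : Finset ℕ) (hs : ∀ d ∈ s, D ≤ d) :
    ∑ d ∈ s, u d ≤ ∑' k : ℕ, u (k + D) := by
  have hsum' : Summable (fun k => u (k + D)) := (summable_nat_add_iff D).mpr hsum
  have : ∑ d ∈ s, u d = ∑ k ∈ s.image (fun d => d - D), u (k + D) := by
    refine Finset.sum_nbij' (fun d => d - D) (fun k => k + D) ?_ ?_ ?_ ?_ ?_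
    · intro a ha; exact Finset.mem_image_of_mem _ ha
    · intro a ha
      obtain ⟨d, hd, rfl⟩ := Finset.mem_image.mp ha
      rwa [Nat.sub_add_cancel (hs d hd)]
    · intro a ha; exact Nat.sub_add_cancel (hs a ha)
    · intro a ha; simp
    · intro a ha; rw [Nat.sub_add_cancel (hs a ha)]
  rw [this]
  exact Summable.sum_le_tsum _ (fun k _ => hu _) hsum'

set_option maxHeartbeats 2000000 in
theorem mvp_main
    (N : ℕ) (hN : 1 ≤ N) (G : ℕ → ℝ)
    (hG_pos : ∀ n : ℕ, 1 ≤ n → 0 < G n)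
    (hG_le : ∀ n : ℕ, 1 ≤ n → G n ≤ 1)
    (hG_N : ∀ n : ℕ, 1 ≤ n → 1 < Nat.gcd n N → G n = 1)
    (hsum : Summable fun d : ℕ => (1 - G d) / d)
    (L : ℕ → ℕ)
    (hLpos : ∀ t : ℕ, 1 ≤ t → 0 < L t)
    (hLdvd : ∀ t : ℕ, 1 ≤ t → L t ∣ L (t + 1))
    (h : ℝ → ℝ) (hh : Tendsto h atTop atTop)
    (hhL : ∀ t : ℕ, 1 ≤ t → ∀ n : ℕ, 1 ≤ n → Nat.gcd n N = 1 → ¬ n ∣ L t → h t < n)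
    (A : ℕ → ℝ)
    (hA : ∀ t : ℕ, A t =
      (∑ r ∈ (L t).divisors, (∏ d ∈ r.divisors, G d) * (Nat.totient (L t / r) : ℝ)) / (L t : ℝ)) :
    ∃ Af : ℝ,
      Tendsto A atTop (nhds Af) ∧
      Tendsto (fun x : ℝ => (∑ n ∈ Finset.Icc 1 ⌊x⌋₊, ∏ d ∈ n.divisors, G d) / x) atTop
        (nhds Af) := by
  set F : ℕ → ℝ := fun n => ∏ d ∈ n.divisors, G d with hFdef
  -- basic facts about F
  have hF_nonneg : ∀ n, 0 ≤ F n := by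
    intro n
    exact Finset.prod_nonneg fun d hd => (hG_pos d (Nat.pos_of_mem_divisors hd)).le
  have hF_le_one : ∀ n, F n ≤ 1 := by
    intro n
    exact Finset.prod_le_one (fun d hd => (hG_pos d (Nat.pos_of_mem_divisors hd)).le)
      (fun d hd => hG_le d (Nat.pos_of_mem_divisors hd))
  -- A t as an average of the periodic function
  have hAt : ∀ t : ℕ, 1 ≤ t →
      A t = (∑ n ∈ Finset.Ioc 0 (L t), F (Nat.gcd n (L t))) / (L t : ℝ) := by
    intro t ht
    rw [hA t, ← mvp_fiber_sum G (L t) (hLpos t ht)]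
  have hA_nonneg : ∀ t : ℕ, 1 ≤ t → 0 ≤ A t := by
    intro t ht
    rw [hAt t ht]
    exact div_nonneg (Finset.sum_nonneg fun n _ => hF_nonneg _) (Nat.cast_nonneg _)
  have hA_le_one : ∀ t : ℕ, 1 ≤ t → A t ≤ 1 := by
    intro t ht
    rw [hAt t ht, div_le_one (by exact_mod_cast hLpos t ht)]
    calc ∑ n ∈ Finset.Ioc 0 (L t), F (Nat.gcd n (L t))
        ≤ ∑ n ∈ Finset.Ioc 0 (L t), 1 := Finset.sum_le_sum fun n _ => hF_le_one _
      _ = (L t : ℝ) := by simp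
  -- pointwise monotonicity in t
  have hP_mono : ∀ t : ℕ, 1 ≤ t → ∀ n : ℕ,
      F (Nat.gcd n (L (t+1))) ≤ F (Nat.gcd n (L t)) := by
    intro t ht n
    have hdvd : Nat.gcd n (L t) ∣ Nat.gcd n (L (t+1)) :=
      Nat.dvd_gcd (Nat.gcd_dvd_left _ _) ((Nat.gcd_dvd_right _ _).trans (hLdvd t ht))
    have hne : Nat.gcd n (L (t+1)) ≠ 0 :=
      (Nat.gcd_pos_of_pos_right n (hLpos (t+1) (le_trans ht (Nat.le_succ t)))).ne'
    exact mvp_prod_subset G (Nat.divisors_subset_of_dvd hne hdvd)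
      (fun d hd => (hG_pos d (Nat.pos_of_mem_divisors hd)).le)
      (fun d hd => hG_le d (Nat.pos_of_mem_divisors hd))
  -- A is antitone (from index 1 on)
  have hA_anti : ∀ t : ℕ, 1 ≤ t → A (t+1) ≤ A t := by
    intro t ht
    have ht1 : 1 ≤ t + 1 := le_trans ht (Nat.le_succ t)
    have hk : (L (t+1) / L t) * L t = L (t+1) := Nat.div_mul_cancel (hLdvd t ht)
    have hAalt : A t = (∑ n ∈ Finset.Ioc 0 (L (t+1)), F (Nat.gcd n (L t))) / (L (t+1) : ℝ) := by
      rw [hAt t ht]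
      rw [← hk, mvp_block_sum (L t) F (L (t+1) / L t)]
      have hLt : (0:ℝ) < (L t : ℝ) := by exact_mod_cast hLpos t ht
      have hq : (0:ℝ) < ((L (t+1) / L t : ℕ) : ℝ) := by
        have : 0 < L (t+1) / L t := by
          apply Nat.div_pos (Nat.le_of_dvd (hLpos (t+1) ht1) (hLdvd t ht)) (hLpos t ht)
        exact_mod_cast this
      rw [Nat.cast_mul]
      field_simp
    rw [hAalt, hAt (t+1) ht1]
    exact div_le_div_of_nonneg_right
      (Finset.sum_le_sum fun n _ => hP_mono t ht n) (Nat.cast_nonneg _)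
  -- convergence of A
  have hB_anti : Antitone (fun s : ℕ => A (s+1)) := by
    apply antitone_nat_of_succ_le
    intro s
    exact hA_anti (s+1) (Nat.le_add_left 1 s)
  have hB_bdd : BddBelow (Set.range (fun s : ℕ => A (s+1))) := by
    refine ⟨0, ?_⟩
    rintro x ⟨s, rfl⟩
    exact hA_nonneg (s+1) (Nat.le_add_left 1 s)
  set Af : ℝ := ⨅ s : ℕ, A (s+1) with hAfdef
  have hconvB : Tendsto (fun s : ℕ => A (s+1)) atTop (nhds Af) :=
    tendsto_atTop_ciInf hB_anti hB_bdd
  have hconvA : Tendsto A atTop (nhds Af) :=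
    (Filter.tendsto_add_atTop_iff_nat 1).mp hconvB
  refine ⟨Af, hconvA, ?_⟩
  -- the summable tail machinery
  set c : ℕ → ℝ := fun d => if Nat.gcd d N = 1 then 1 - G d else 0 with hcdef
  set u : ℕ → ℝ := fun d => c d / d with hudef
  have hc_nonneg : ∀ d : ℕ, 0 < d → 0 ≤ c d := by
    intro d hd
    simp only [hcdef]
    split
    · linarith [hG_le d hd]
    · exact le_refl 0
  have hu_nonneg : ∀ d : ℕ, 0 ≤ u d := by
    intro d
    rcases Nat.eq_zero_or_pos d with rfl | hd
    · simp [hudef]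
    · exact div_nonneg (hc_nonneg d hd) (Nat.cast_nonneg d)
  have hu_le : ∀ d : ℕ, u d ≤ (1 - G d) / d := by
    intro d
    rcases Nat.eq_zero_or_pos d with rfl | hd
    · simp [hudef]
    · apply div_le_div_of_nonneg_right ?_ (Nat.cast_nonneg d)
      simp only [hcdef]
      split
      · exact le_refl _
      · linarith [hG_le d hd]
  have hsum_u : Summable u := Summable.of_nonneg_of_le hu_nonneg hu_le hsum
  set R : ℕ → ℝ := fun D => ∑' k : ℕ, u (k + D) with hRdef
  have hR_tendsto : Tendsto R atTop (nhds 0) := tendsto_sum_nat_add u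
  have hR_nonneg : ∀ D, 0 ≤ R D := fun D => tsum_nonneg fun k => hu_nonneg _
  -- key pointwise bound
  have hkey : ∀ t : ℕ, 1 ≤ t → ∀ D : ℕ, (D:ℝ) ≤ h t → ∀ n : ℕ, 0 < n →
      F (Nat.gcd n (L t)) - F n ≤ ∑ d ∈ n.divisors.filter (fun d => D ≤ d), c d := by
    intro t ht D hD n hn
    set s₀ := (Nat.gcd n (L t)).divisors with hs₀
    have hsub : s₀ ⊆ n.divisors :=
      Nat.divisors_subset_of_dvd hn.ne' (Nat.gcd_dvd_left _ _)
    have hsplit : (∏ d ∈ n.divisors \ s₀, G d) * F (Nat.gcd n (L t)) = F n :=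
      Finset.prod_sdiff hsub
    set Q : ℝ := ∏ d ∈ n.divisors \ s₀, G d with hQdef
    have hdiffpos : ∀ d ∈ n.divisors \ s₀, 0 < d :=
      fun d hd => Nat.pos_of_mem_divisors (Finset.mem_sdiff.mp hd).1
    have hQ0 : 0 ≤ Q := Finset.prod_nonneg fun d hd => (hG_pos d (hdiffpos d hd)).le
    have hQ1 : Q ≤ 1 := Finset.prod_le_one
      (fun d hd => (hG_pos d (hdiffpos d hd)).le) (fun d hd => hG_le d (hdiffpos d hd))
    have hW : 1 - ∑ d ∈ n.divisors \ s₀, (1 - G d) ≤ Q :=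
      mvp_weierstrass _ G (fun d hd => (hG_pos d (hdiffpos d hd)).le)
        (fun d hd => hG_le d (hdiffpos d hd))
    have hPv0 : 0 ≤ F (Nat.gcd n (L t)) := hF_nonneg _
    have hPv1 : F (Nat.gcd n (L t)) ≤ 1 := hF_le_one _
    have h1 : F (Nat.gcd n (L t)) - F n ≤ ∑ d ∈ n.divisors \ s₀, (1 - G d) := by
      nlinarith [hsplit]
    have h2 : ∑ d ∈ n.divisors \ s₀, (1 - G d) = ∑ d ∈ n.divisors \ s₀, c d := by
      refine Finset.sum_congr rfl fun d hd => ?_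
      simp only [hcdef]
      split
      · rfl
      · rename_i hgcd
        have hdpos : 0 < d := hdiffpos d hd
        have hgpos : 0 < Nat.gcd d N := Nat.gcd_pos_of_pos_left N hdpos
        have : 1 < Nat.gcd d N := by omega
        rw [hG_N d hdpos this]
        ring
    have h3 : ∑ d ∈ n.divisors \ s₀, c d
        = ∑ d ∈ (n.divisors \ s₀).filter (fun d => D ≤ d), c d := by
      rw [Finset.sum_filter_of_ne]
      intro d hd hcd
      have hdpos : 0 < d := hdiffpos d hd
      have hgcd1 : Nat.gcd d N = 1 := by
        by_contra hne
        simp only [hcdef, if_neg hne] at hcd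
        exact hcd rfl
      have hndvd : ¬ d ∣ L t := by
        intro hdl
        have hdn : d ∣ n := (Nat.mem_divisors.mp (Finset.mem_sdiff.mp hd).1).1
        have : d ∈ s₀ := Nat.mem_divisors.mpr
          ⟨Nat.dvd_gcd hdn hdl, (Nat.gcd_pos_of_pos_right n (hLpos t ht)).ne'⟩
        exact (Finset.mem_sdiff.mp hd).2 this
      have := hhL t ht d hdpos hgcd1 hndvd
      have hDd : (D:ℝ) < (d:ℝ) := lt_of_le_of_lt hD this
      exact_mod_cast hDd.le
    have h4 : ∑ d ∈ (n.divisors \ s₀).filter (fun d => D ≤ d), c d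
        ≤ ∑ d ∈ n.divisors.filter (fun d => D ≤ d), c d := by
      apply Finset.sum_le_sum_of_subset_of_nonneg
      · exact Finset.filter_subset_filter _ (Finset.sdiff_subset)
      · intro d hd _
        exact hc_nonneg d (Nat.pos_of_mem_divisors (Finset.mem_filter.mp hd).1)
    linarith
  -- partial sum bounds for the periodic majorant
  have hblock : ∀ t : ℕ, 1 ≤ t → ∀ m : ℕ,
      ((m:ℝ) - (L t : ℝ)) * A t ≤ ∑ n ∈ Finset.Ioc 0 m, F (Nat.gcd n (L t)) ∧
      ∑ n ∈ Finset.Ioc 0 m, F (Nat.gcd n (L t)) ≤ ((m:ℝ) + (L t : ℝ)) * A t := by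
    intro t ht m
    set Lt := L t with hLtdef
    have hLt0 : 0 < Lt := hLpos t ht
    have hLt0' : (0:ℝ) < (Lt:ℝ) := by exact_mod_cast hLt0
    set q := m / Lt with hqdef
    have hSig : ∑ n ∈ Finset.Ioc 0 Lt, F (Nat.gcd n Lt) = (Lt:ℝ) * A t := by
      rw [hAt t ht]
      field_simp
      exact (mul_div_cancel_left₀ _ hLt0'.ne').symm
    have hql : q * Lt ≤ m := Nat.div_mul_le_self m Lt
    have hqu : m < (q + 1) * Lt := by
      have := Nat.lt_succ_self q
      exact (Nat.div_lt_iff_lt_mul hLt0).mp this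
    constructor
    · -- lower bound
      have hsub : Finset.Ioc 0 (q * Lt) ⊆ Finset.Ioc 0 m :=
        Finset.Ioc_subset_Ioc le_rfl hql
      have h1 : ∑ n ∈ Finset.Ioc 0 (q * Lt), F (Nat.gcd n Lt)
          ≤ ∑ n ∈ Finset.Ioc 0 m, F (Nat.gcd n Lt) :=
        Finset.sum_le_sum_of_subset_of_nonneg hsub (fun n _ _ => hF_nonneg _)
      rw [mvp_block_sum Lt F q, hSig] at h1
      have hmq : (m:ℝ) - (Lt:ℝ) < (q:ℝ) * (Lt:ℝ) := by
        have : (m:ℝ) < ((q:ℝ) + 1) * (Lt:ℝ) := by exact_mod_cast hqu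
        nlinarith
      have hA0 := hA_nonneg t ht
      nlinarith
    · -- upper bound
      have hsub : Finset.Ioc 0 m ⊆ Finset.Ioc 0 ((q+1) * Lt) :=
        Finset.Ioc_subset_Ioc le_rfl hqu.le
      have h1 : ∑ n ∈ Finset.Ioc 0 m, F (Nat.gcd n Lt)
          ≤ ∑ n ∈ Finset.Ioc 0 ((q+1) * Lt), F (Nat.gcd n Lt) :=
        Finset.sum_le_sum_of_subset_of_nonneg hsub (fun n _ _ => hF_nonneg _)
      rw [mvp_block_sum Lt F (q+1), hSig] at h1
      have hmq : ((q:ℝ) + 1) * (Lt:ℝ) ≤ (m:ℝ) + (Lt:ℝ) := by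
        have : (q:ℝ) * (Lt:ℝ) ≤ (m:ℝ) := by exact_mod_cast hql
        nlinarith
      have hA0 := hA_nonneg t ht
      calc ∑ n ∈ Finset.Ioc 0 m, F (Nat.gcd n Lt)
          ≤ ((q:ℝ)+1) * (Lt:ℝ) * A t := by push_cast at h1 ⊢; linarith
        _ ≤ ((m:ℝ) + (Lt:ℝ)) * A t := by nlinarith
  -- pointwise upper bound F n ≤ periodic majorant
  have hFP : ∀ t : ℕ, ∀ n : ℕ, 0 < n → 0 < L t → F n ≤ F (Nat.gcd n (L t)) := by
    intro t n hn hLt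
    have hsub : (Nat.gcd n (L t)).divisors ⊆ n.divisors :=
      Nat.divisors_subset_of_dvd hn.ne' (Nat.gcd_dvd_left _ _)
    exact mvp_prod_subset G hsub
      (fun d hd => (hG_pos d (Nat.pos_of_mem_divisors hd)).le)
      (fun d hd => hG_le d (Nat.pos_of_mem_divisors hd))
  -- the mean value limit
  rw [Metric.tendsto_atTop]
  intro ε hε
  -- choose D with R D < ε/4
  obtain ⟨D, hD⟩ : ∃ D : ℕ, R D < ε / 4 := by
    have := Metric.tendsto_atTop.mp hR_tendsto (ε/4) (by linarith)
    obtain ⟨D, hD⟩ := this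
    refine ⟨D, ?_⟩
    have := hD D le_rfl
    rw [Real.dist_eq, sub_zero] at this
    exact lt_of_le_of_lt (le_abs_self _) this
  -- choose T₁ for A convergence
  obtain ⟨T₁, hT₁⟩ := Metric.tendsto_atTop.mp hconvA (ε/4) (by linarith)
  -- choose X with h x ≥ D for x ≥ X
  obtain ⟨X, hX⟩ := Filter.eventually_atTop.mp (hh.eventually_ge_atTop (D:ℝ))
  set t := max (max T₁ 1) ⌈X⌉₊ with htdef
  have ht1 : 1 ≤ t := le_trans (le_max_right T₁ 1) (le_trans (le_max_left _ _) le_rfl)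
  have htT : T₁ ≤ t := le_trans (le_max_left T₁ 1) (le_max_left _ _)
  have htX : X ≤ (t:ℝ) := by
    have h1 : (⌈X⌉₊ : ℝ) ≤ (t:ℝ) := by exact_mod_cast le_max_right (max T₁ 1) ⌈X⌉₊
    exact le_trans (Nat.le_ceil X) h1
  have hDht : (D:ℝ) ≤ h t := hX (t:ℝ) htX
  have hAt_close : |A t - Af| < ε/4 := by
    have := hT₁ t htT
    rwa [Real.dist_eq] at this
  have hAt0 := hA_nonneg t ht1
  have hAt1 := hA_le_one t ht1
  set Lt := L t with hLtdef
  have hLt0 : 0 < Lt := hLpos t ht1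
  have hLt1 : (1:ℝ) ≤ (Lt:ℝ) := by exact_mod_cast hLt0
  refine ⟨max 1 (4 * ((Lt:ℝ) + 1) / ε), fun x hx => ?_⟩
  have hx1 : (1:ℝ) ≤ x := le_trans (le_max_left _ _) hx
  have hx2 : 4 * ((Lt:ℝ) + 1) / ε ≤ x := le_trans (le_max_right _ _) hx
  have hx0 : (0:ℝ) < x := by linarith
  have hx2' : 4 * ((Lt:ℝ) + 1) ≤ ε * x := by
    rw [div_le_iff₀ hε] at hx2
    linarith
  set m := ⌊x⌋₊ with hmdef
  have hm1 : 1 ≤ m := Nat.le_floor (by exact_mod_cast hx1)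
  have hmx : (m:ℝ) ≤ x := Nat.floor_le hx0.le
  have hxm : x - 1 ≤ (m:ℝ) := by
    have := Nat.lt_floor_add_one x
    linarith
  have hIcc : Finset.Icc 1 m = Finset.Ioc 0 m := Finset.Icc_add_one_left_eq_Ioc 0 m
  set S : ℝ := ∑ n ∈ Finset.Ioc 0 m, F n with hSdef
  obtain ⟨hlo, hup⟩ := hblock t ht1 m
  -- upper bound for S
  have hS_up : S ≤ ((m:ℝ) + (Lt:ℝ)) * A t := by
    refine le_trans ?_ hup
    exact Finset.sum_le_sum fun n hn => hFP t n (Finset.mem_Ioc.mp hn).1 hLt0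
  -- lower bound for S
  have hS_lo : ((m:ℝ) - (Lt:ℝ)) * A t - (m:ℝ) * R D ≤ S := by
    have hdiff : ∑ n ∈ Finset.Ioc 0 m, (F (Nat.gcd n Lt) - F n) ≤ (m:ℝ) * R D := by
      have h1 : ∑ n ∈ Finset.Ioc 0 m, (F (Nat.gcd n Lt) - F n)
          ≤ ∑ n ∈ Finset.Ioc 0 m, ∑ d ∈ n.divisors.filter (fun d => D ≤ d), c d :=
        Finset.sum_le_sum fun n hn => hkey t ht1 D hDht n (Finset.mem_Ioc.mp hn).1
      have h2 := mvp_swap m D c hc_nonneg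
      have h3 : ∑ d ∈ (Finset.Ioc 0 m).filter (fun d => D ≤ d), c d / (d:ℝ) ≤ R D := by
        have := mvp_tail_bound D u hu_nonneg hsum_u
          ((Finset.Ioc 0 m).filter (fun d => D ≤ d))
          (fun d hd => (Finset.mem_filter.mp hd).2)
        exact this
      have hm0 : (0:ℝ) ≤ (m:ℝ) := Nat.cast_nonneg m
      calc ∑ n ∈ Finset.Ioc 0 m, (F (Nat.gcd n Lt) - F n)
          ≤ (m:ℝ) * ∑ d ∈ (Finset.Ioc 0 m).filter (fun d => D ≤ d), c d / (d:ℝ) :=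
            le_trans h1 h2
        _ ≤ (m:ℝ) * R D := mul_le_mul_of_nonneg_left h3 hm0
    rw [Finset.sum_sub_distrib] at hdiff
    linarith
  -- final computation
  rw [Real.dist_eq, hIcc]
  rw [abs_lt] at hAt_close ⊢
  have hRD0 := hR_nonneg D
  have hεx : (0:ℝ) < ε * x := mul_pos hε hx0
  have hLtA : (Lt:ℝ) * A t ≤ (Lt:ℝ) := mul_le_of_le_one_right (by positivity) hAt1
  have hmA : (m:ℝ) * A t ≤ x * A t := mul_le_mul_of_nonneg_right hmx hAt0
  constructor
  · -- -ε < S/x - Af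
    have f1 : (x - 1) * A t ≤ (m:ℝ) * A t := mul_le_mul_of_nonneg_right hxm hAt0
    have f3 : x * (Af - ε/4) < x * A t := mul_lt_mul_of_pos_left (by linarith) hx0
    have f4 : (m:ℝ) * R D ≤ x * R D := mul_le_mul_of_nonneg_right hmx hRD0
    have f5 : x * R D < x * (ε/4) := mul_lt_mul_of_pos_left hD hx0
    have key : (Af - ε) * x < S := by linarith [hS_lo, f1, f3, f4, f5, hLtA, hAt1, hx2', hεx]
    have : Af - ε < S / x := (lt_div_iff₀ hx0).mpr key
    linarith
  · -- S/x - Af < ε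
    have e3 : x * A t < x * (Af + ε/4) := mul_lt_mul_of_pos_left (by linarith) hx0
    have key : S < (Af + ε) * x := by linarith [hS_up, hmA, hLtA, e3, hx2', hεx]
    have : S / x < Af + ε := (div_lt_iff₀ hx0).mpr key
    linarith


/-- **Higher moments.** Fix `α > 1`.  Under the hypotheses of the main theorem, the
sequence `A_t^{(α)} = (1/L t) ∑_{r ∣ L t} f(r)^α φ(L t / r)` converges to a limit which
is the mean value of `f^α`. -/
theorem mean_value_of_power
    (α : ℝ) (hα : 1 < α)
    (N : ℕ) (hN : 1 ≤ N) (g : ℕ → ℝ)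
    (hg_pos : ∀ n : ℕ, 1 ≤ n → 0 < g n)
    (hg_le : ∀ n : ℕ, 1 ≤ n → g n ≤ 1)
    (hg_N : ∀ n : ℕ, 1 ≤ n → 1 < Nat.gcd n N → g n = 1)
    (hsum : Summable fun d : ℕ => (1 - g d) / d)
    (f : ℕ → ℝ) (hf : ∀ n : ℕ, f n = ∏ d ∈ n.divisors, g d)
    (L : ℕ → ℕ)
    (hLpos : ∀ t : ℕ, 1 ≤ t → 0 < L t)
    (hLdvd : ∀ t : ℕ, 1 ≤ t → L t ∣ L (t + 1))
    (hLtop : Tendsto (fun t : ℕ => L t) atTop atTop)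
    (h : ℝ → ℝ) (hh : Tendsto h atTop atTop)
    (hhL : ∀ t : ℕ, 1 ≤ t → ∀ n : ℕ, 1 ≤ n → Nat.gcd n N = 1 → ¬ n ∣ L t → h t < n)
    (A : ℕ → ℝ)
    (hA : ∀ t : ℕ, A t =
      (∑ r ∈ (L t).divisors, (f r) ^ α * (Nat.totient (L t / r) : ℝ)) / (L t : ℝ)) :
    ∃ Afα : ℝ,
      Tendsto A atTop (nhds Afα) ∧
      Tendsto (fun x : ℝ => (∑ n ∈ Finset.Icc 1 ⌊x⌋₊, (f n) ^ α) / x) atTop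
        (nhds Afα) := by
  set G : ℕ → ℝ := fun d => g d ^ α with hGdef
  have hfα : ∀ n : ℕ, (f n) ^ α = ∏ d ∈ n.divisors, G d := by
    intro n
    rw [hf n, ← Real.finset_prod_rpow n.divisors g
      (fun d hd => (hg_pos d (Nat.pos_of_mem_divisors hd)).le) α]
  have hG_pos : ∀ n : ℕ, 1 ≤ n → 0 < G n := fun n hn =>
    Real.rpow_pos_of_pos (hg_pos n hn) α
  have hG_le : ∀ n : ℕ, 1 ≤ n → G n ≤ 1 := fun n hn =>
    Real.rpow_le_one (hg_pos n hn).le (hg_le n hn) (by linarith)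
  have hG_N : ∀ n : ℕ, 1 ≤ n → 1 < Nat.gcd n N → G n = 1 := by
    intro n hn hgcd
    simp only [hGdef, hg_N n hn hgcd, Real.one_rpow]
  have hsumG : Summable fun d : ℕ => (1 - G d) / d := by
    apply Summable.of_nonneg_of_le (f := fun d : ℕ => α * ((1 - g d) / d))
    · intro d
      rcases Nat.eq_zero_or_pos d with rfl | hd
      · simp
      · apply div_nonneg _ (Nat.cast_nonneg d)
        linarith [hG_le d hd]
    · intro d
      rcases Nat.eq_zero_or_pos d with rfl | hd
      · simp
      · rw [mul_div_assoc']
        apply div_le_div_of_nonneg_right ?_ (Nat.cast_nonneg d)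
        have hb := one_add_mul_self_le_rpow_one_add
          (s := g d - 1) (by linarith [hg_pos d hd]) hα.le
        have : (1 : ℝ) + (g d - 1) = g d := by ring
        rw [this] at hb
        simp only [hGdef]
        linarith
    · exact hsum.mul_left α
  have hA' : ∀ t : ℕ, A t =
      (∑ r ∈ (L t).divisors, (∏ d ∈ r.divisors, G d) * (Nat.totient (L t / r) : ℝ))
        / (L t : ℝ) := by
    intro t
    rw [hA t]
    congr 1
    exact Finset.sum_congr rfl fun r _ => by rw [hfα r]
  obtain ⟨Af, h1, h2⟩ := mvp_main N hN G hG_pos hG_le hG_N hsumG L hLpos hLdvd h hh hhL A hA'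
  refine ⟨Af, h1, ?_⟩
  apply h2.congr
  intro x
  congr 1
  exact Finset.sum_congr rfl fun n _ => (hfα n).symm
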